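/- Let f_1, …, f_m (m ≥ 2) be formal power series f_i(q) = ∑_{n≥0} a_i(n) q^n with real coefficients such that (−1)^n a_i(n) > 0 for all n ≥ 0 except that a_i(2) is allowed to be 0. Then the product f = f_1 ⋯ f_m = ∑_{n≥0} a(n) q^n satisfies (−1)^n a(n) > 0 for all n ≥ 0. -/

import Mathlib

theorem stmt17 (m : ℕ) (hm : 2 ≤ m) (f : Fin m → PowerSeries ℝ)
    (h : ∀ i, ∀ n : ℕ, n ≠ 2 → 0 < (-1 : ℝ) ^ n * PowerSeries.coeff (R := ℝ) n (f i))
    (h2 : ∀ i, 0 ≤ PowerSeries.coeff (R := ℝ) 2 (f i)) :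
    ∀ n : ℕ, 0 < (-1 : ℝ) ^ n * PowerSeries.coeff (R := ℝ) n (∏ i, f i) := by
  intro n
  have key : ∀ l : Fin m →₀ ℕ, (∑ i, l i) = n →
      (-1 : ℝ) ^ n * ∏ i, PowerSeries.coeff (R := ℝ) (l i) (f i)
        = ∏ i, ((-1 : ℝ) ^ (l i) * PowerSeries.coeff (R := ℝ) (l i) (f i)) := by
    intro l hl
    rw [Finset.prod_mul_distrib, Finset.prod_pow_eq_pow_sum, hl]
  have nonneg : ∀ (i : Fin m) (k : ℕ), 0 ≤ (-1 : ℝ) ^ k * PowerSeries.coeff (R := ℝ) k (f i) := by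
    intro i k
    rcases eq_or_ne k 2 with rfl | hk
    · simpa using h2 i
    · exact (h i k hk).le
  rw [PowerSeries.coeff_prod, Finset.mul_sum]
  apply Finset.sum_pos'
  · intro l hl
    rw [Finset.mem_finsuppAntidiag] at hl
    rw [key l (by simpa using hl.1)]
    exact Finset.prod_nonneg fun i _ => nonneg i (l i)
  · rcases eq_or_ne n 2 with rfl | hn
    · set i0 : Fin m := ⟨0, by omega⟩ with hi0
      set i1 : Fin m := ⟨1, by omega⟩ with hi1
      have hne : i0 ≠ i1 := by simp [hi0, hi1, Fin.ext_iff]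
      set l : Fin m →₀ ℕ := Finsupp.single i0 1 + Finsupp.single i1 1 with hl
      have hval : ∀ i, l i ≠ 2 := by
        intro i
        rcases eq_or_ne i i0 with rfl | h0
        · simp [hl, Finsupp.single_apply, hne, hne.symm]
        rcases eq_or_ne i i1 with rfl | h1
        · simp [hl, Finsupp.single_apply, hne, hne.symm]
        · simp [hl, Finsupp.single_apply, Ne.symm h0, Ne.symm h1]
      have hsum : (∑ i, l i) = 2 := by
        simp [hl, Finsupp.add_apply, Finsupp.single_apply, Finset.sum_add_distrib,
          Finset.sum_ite_eq, hne]
      refine ⟨l, ?_, ?_⟩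
      · rw [Finset.mem_finsuppAntidiag]
        exact ⟨hsum, Finset.subset_univ _⟩
      · rw [key _ hsum]
        exact Finset.prod_pos fun i _ => h i (l i) (hval i)
    · set i0 : Fin m := ⟨0, by omega⟩ with hi0
      set l : Fin m →₀ ℕ := Finsupp.single i0 n with hl
      have hval : ∀ i, l i ≠ 2 := by
        intro i
        rcases eq_or_ne i i0 with rfl | h0
        · simpa [hl] using hn
        · simp [hl, Finsupp.single_apply, Ne.symm h0]
      have hsum : (∑ i, l i) = n := by
        simp [hl, Finsupp.single_apply, Finset.sum_ite_eq]
      refine ⟨l, ?_, ?_⟩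
      · rw [Finset.mem_finsuppAntidiag]
        exact ⟨hsum, Finset.subset_univ _⟩
      · rw [key _ hsum]
        exact Finset.prod_pos fun i _ => h i (l i) (hval i)
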